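/- Extension-variable lemma: let Γ be a MaxSAT instance containing a clause C ∨ b, where b is a blocking variable and this clause is the unique occurrence of b in Γ, and write C = ℓ₁ ∨ … ∨ ℓ_t. Then there is a cost-LPR derivation from Γ containing all the clauses ¬ℓᵢ ∨ ¬b for i ∈ [t] (thereby turning b into an extension variable satisfying b ↔ ¬C). -/
import Mathlib


namespace PaperMaxSAT

/-- Variables are natural numbers. -/
abbrev Var := ℕ

/-- A literal is a variable together with a polarity. -/
abbrev Lit := Var × Bool

/-- Negation of a literal. -/
def negLit (l : Lit) : Lit := (l.1, !l.2)

/-- A clause is a finite set of literals. -/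
abbrev Clause := Finset Lit

/-- A CNF formula is a finite multiset of clauses. -/
abbrev CNF := Multiset Clause

/-- A tautological clause contains a literal together with its negation. -/
def isTaut (C : Clause) : Prop := ∃ l ∈ C, negLit l ∈ C

/-- The value of a substitution at a variable: a Boolean constant or a literal. -/
abbrev SubVal := Bool ⊕ Lit

/-- Negation on substitution values. -/
def negSV : SubVal → SubVal
  | .inl b => .inl !b
  | .inr l => .inr (negLit l)

/-- A substitution maps each variable to `0`, `1` or a literal. -/
abbrev Sub := Var → SubVal

/-- Applying a substitution to a literal, respecting `σ(¬x) = ¬σ(x)`. -/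
def appLit (σ : Sub) (l : Lit) : SubVal :=
  if l.2 then σ l.1 else negSV (σ l.1)

/-- The identity substitution. -/
def idSub : Sub := fun v => .inr (v, true)

/-- `σ(C) = 1` : some literal of `C` is mapped to true by `σ`. -/
def clauseTrue (σ : Sub) (C : Clause) : Prop := ∃ l ∈ C, appLit σ l = Sum.inl true

instance (σ : Sub) (C : Clause) : Decidable (clauseTrue σ C) := by
  unfold clauseTrue; infer_instance

/-- `C↾σ` : the clause whose literals are the images under `σ` of the literals
of `C` mapped to literals (literals mapped to `0` are dropped). -/
def restrictClause (σ : Sub) (C : Clause) : Clause :=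
  C.biUnion (fun l => match appLit σ l with
    | .inr m => {m}
    | _ => (∅ : Clause))

/-- `Γ↾σ` : restrict every clause of `Γ`; clauses mapped to `1` are removed. -/
def restrictCNF (σ : Sub) (Γ : CNF) : CNF :=
  (Γ.filter (fun C => ¬ clauseTrue σ C)).map (restrictClause σ)

/-- `σ ⊨ C` : `σ(C) = 1` or `σ(C)` is tautological. -/
def subSat (σ : Sub) (C : Clause) : Prop :=
  clauseTrue σ C ∨ isTaut (restrictClause σ C)

/-- The assignment `¬C`, setting all literals of `C` to false. -/
def negSub (C : Clause) : Sub := fun v =>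
  if (v, true) ∈ C then .inl false
  else if (v, false) ∈ C then .inl true
  else .inr (v, true)

/-- The substitution setting the literal `l` to true and touching nothing else. -/
def litSub (l : Lit) : Sub := fun v => if v = l.1 then .inl l.2 else .inr (v, true)

/-- Unit propagation derives the empty clause. -/
inductive UPFalse : CNF → Prop
  | empty {Γ : CNF} : (∅ : Clause) ∈ Γ → UPFalse Γ
  | step {Γ : CNF} (l : Lit) : ({l} : Clause) ∈ Γ →
      UPFalse (restrictCNF (litSub l) Γ) → UPFalse Γ

/-- The unit clauses `¬l` for `l ∈ C`. -/
def negUnits (C : Clause) : CNF := C.val.map (fun l => ({negLit l} : Clause))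

/-- `Γ ⊢₁ C` : unit propagation on `Γ↾¬C` produces the empty clause. -/
def UPimplies (Γ : CNF) (C : Clause) : Prop := UPFalse (Γ + negUnits C)

/-- `Γ ⊢₁ Δ` : `Γ ⊢₁ D` for every `D ∈ Δ`. -/
def UPimpliesAll (Γ Δ : CNF) : Prop := ∀ D ∈ Δ, UPimplies Γ D

/-- Total assignments. -/
abbrev TAssign := Var → Bool

/-- A total assignment satisfies a clause. -/
def satC (α : TAssign) (C : Clause) : Prop := ∃ l ∈ C, α l.1 = l.2

instance (α : TAssign) (C : Clause) : Decidable (satC α C) := by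
  unfold satC; infer_instance

/-- A total assignment satisfies a CNF. -/
def satCNF (α : TAssign) (Γ : CNF) : Prop := ∀ C ∈ Γ, satC α C

/-- `τ ∘ σ` : composition of a total assignment with a substitution. -/
def comp (τ : TAssign) (σ : Sub) : TAssign := fun v =>
  match σ v with
  | .inl b => b
  | .inr l => if l.2 then τ l.1 else !(τ l.1)

/-- `τ` extends the assignment `¬C`. -/
def extendsNeg (τ : TAssign) (C : Clause) : Prop := ∀ l ∈ C, τ l.1 = !l.2

/-- The cost of a total assignment w.r.t. a set `B` of blocking variables:
the number of blocking variables set to true. -/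
def cost (B : Finset Var) (α : TAssign) : ℕ := (B.filter (fun b => α b = true)).card

/-- The cost of a MaxSAT instance encoded with blocking variables `B`:
the minimum cost of a satisfying total assignment. -/
noncomputable def costCNF (B : Finset Var) (Γ : CNF) : ℕ :=
  sInf {k | ∃ α : TAssign, satCNF α Γ ∧ cost B α = k}

/-- `σ` witnesses that `C` is cost-SR w.r.t. `Γ` (with blocking variables `B`):
the redundancy condition `Γ↾¬C ⊢₁ (Γ ∪ {C})↾σ` and the cost condition. -/
def CostSRwit (B : Finset Var) (Γ : CNF) (C : Clause) (σ : Sub) : Prop :=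
  UPimpliesAll (restrictCNF (negSub C) Γ) (restrictCNF σ (C ::ₘ Γ)) ∧
  ∀ τ : TAssign, extendsNeg τ C → cost B (comp τ σ) ≤ cost B τ

/-- `C` is cost-SR w.r.t. `Γ`. -/
def CostSR (B : Finset Var) (Γ : CNF) (C : Clause) : Prop := ∃ σ, CostSRwit B Γ C σ

/-- A substitution which is an assignment: every value is `0`, `1`,
or the variable itself. -/
def isAssign (σ : Sub) : Prop :=
  ∀ v, σ v = .inl true ∨ σ v = .inl false ∨ σ v = .inr (v, true)

/-- The variables of a clause. -/
def varsClause (C : Clause) : Finset Var := C.image Prod.fst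

/-- The variables of a CNF. -/
def varsCNF (Γ : CNF) : Finset Var := (Γ.map varsClause).sup

/-- Membership in the domain of an assignment. -/
def subDom (σ : Sub) (v : Var) : Prop := ∃ b : Bool, σ v = .inl b

/-- `C` is cost-PR w.r.t. `Γ`: cost-SR witnessed by an assignment. -/
def CostPR (B : Finset Var) (Γ : CNF) (C : Clause) : Prop :=
  ∃ σ, CostSRwit B Γ C σ ∧ isAssign σ

/-- `C` is cost-SPR w.r.t. `Γ`: cost-SR witnessed by an assignment with
domain `dom(¬C) = Var(C)`. -/
def CostSPR (B : Finset Var) (Γ : CNF) (C : Clause) : Prop :=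
  ∃ σ, CostSRwit B Γ C σ ∧ isAssign σ ∧ (∀ v, subDom σ v ↔ v ∈ varsClause C)

/-- `C` is cost-LPR w.r.t. `Γ`: cost-SR witnessed by an assignment with
domain `dom(¬C)` differing from `¬C` on exactly one variable. -/
def CostLPR (B : Finset Var) (Γ : CNF) (C : Clause) : Prop :=
  ∃ σ, CostSRwit B Γ C σ ∧ isAssign σ ∧ (∀ v, subDom σ v ↔ v ∈ varsClause C) ∧
    ((varsClause C).filter (fun v => σ v ≠ negSub C v)).card = 1

/-- `D` is a resolvent of `E₁` and `E₂`. -/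
def resolvent (D E₁ E₂ : Clause) : Prop :=
  ∃ x : Var, (x, true) ∈ E₁ ∧ (x, false) ∈ E₂ ∧
    D = E₁.erase (x, true) ∪ E₂.erase (x, false)

/-- A derivation from `Γ` in the calculus with redundancy rule `Red`:
every clause of the list is in `Γ`, a weakening of an earlier clause,
a resolvent of two earlier clauses, or redundant (w.r.t. `Red`) relative to
`Γ` together with the earlier clauses, using no new variables. -/
def IsDeriv (Red : Finset Var → CNF → Clause → Prop) (B : Finset Var) (Γ : CNF)
    (L : List Clause) : Prop :=
  ∀ i, ∀ hi : i < L.length,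
    L[i] ∈ Γ ∨
    (∃ j, ∃ hj : j < i, L[j]'(hj.trans hi) ⊆ L[i]) ∨
    (∃ j k, ∃ hj : j < i, ∃ hk : k < i,
      resolvent L[i] (L[j]'(hj.trans hi)) (L[k]'(hk.trans hi))) ∨
    (Red B (Γ + (↑(L.take i) : CNF)) L[i] ∧ varsClause L[i] ⊆ varsCNF Γ)

/-- `C ∨ ℓ` is a cost blocked clause (cost-BC) w.r.t. `Γ` and `ℓ`. -/
def CostBC (B : Finset Var) (Γ : CNF) (C : Clause) (l : Lit) : Prop :=
  (∀ D ∈ Γ, negLit l ∈ D → isTaut (C ∪ D.erase (negLit l))) ∧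
  ¬(l.2 = true ∧ l.1 ∈ B)

/-- Hamming distance between two total assignments, over the variables in `V`. -/
def HD (V : Finset Var) (α β : TAssign) : ℕ := (V.filter (fun v => α v ≠ β v)).card

/-- `flip(C, σ) ≥ d` : some total assignment `τ` extending `¬C` has
Hamming distance (over `V`) at least `d` from `τ ∘ σ`. -/
def flipGE (V : Finset Var) (C : Clause) (σ : Sub) (d : ℕ) : Prop :=
  ∃ τ : TAssign, extendsNeg τ C ∧ d ≤ HD V τ (comp τ σ)



section AuxLemmas

lemma negLit_negLit (l : Lit) : negLit (negLit l) = l := by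
  simp [negLit]

lemma negLit_fst (l : Lit) : (negLit l).1 = l.1 := rfl

lemma appLit_inr {σ : Sub} {m : Lit} (h : σ m.1 = .inr (m.1, true)) :
    appLit σ m = .inr m := by
  rcases m with ⟨v, p⟩
  cases p <;> simp [appLit, h, negSV, negLit]

lemma appLit_litSub_other {l m : Lit} (h : m.1 ≠ l.1) :
    appLit (litSub l) m = .inr m :=
  appLit_inr (by simp [litSub, h])

lemma appLit_litSub_neg (l : Lit) : appLit (litSub l) (negLit l) = .inl false := by
  rcases l with ⟨v, p⟩
  cases p <;> simp [appLit, litSub, negLit, negSV]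

lemma mem_restrictCNF {σ : Sub} {Γ : CNF} {X : Clause} :
    X ∈ restrictCNF σ Γ ↔ ∃ E ∈ Γ, ¬clauseTrue σ E ∧ restrictClause σ E = X := by
  simp only [restrictCNF, Multiset.mem_map, Multiset.mem_filter, decide_not]
  constructor
  · rintro ⟨E, ⟨hE, hnt⟩, rfl⟩
    exact ⟨E, hE, by simpa using hnt, rfl⟩
  · rintro ⟨E, hE, hnt, rfl⟩
    exact ⟨E, ⟨hE, by simpa using hnt⟩, rfl⟩

lemma UPFalse.mono {Γ Γ' : CNF} (h : UPFalse Γ) (hs : ∀ C ∈ Γ, C ∈ Γ') : UPFalse Γ' := by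
  induction h generalizing Γ' with
  | empty hm => exact .empty (hs _ hm)
  | step l hm _ ih =>
    refine .step l (hs _ hm) (ih fun C hC => ?_)
    rw [mem_restrictCNF] at hC ⊢
    obtain ⟨E, hE, h1, h2⟩ := hC
    exact ⟨E, hs _ hE, h1, h2⟩

lemma upfalse_self (D : Clause) : ∀ (Γ : CNF), D ∈ Γ →
    (∀ m ∈ D, ({negLit m} : Clause) ∈ Γ) → UPFalse Γ := by
  induction D using Finset.strongInduction with
  | _ D ih =>
    intro Γ hD hunits
    rcases D.eq_empty_or_nonempty with rfl | ⟨l, hl⟩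
    · exact .empty hD
    · refine .step (negLit l) (hunits l hl) ?_
      have happl : appLit (litSub (negLit l)) l = .inl false := by
        have h := appLit_litSub_neg (negLit l)
        rwa [negLit_negLit] at h
      have hother : ∀ m : Lit, m.1 ≠ l.1 → appLit (litSub (negLit l)) m = .inr m := by
        intro m hm
        exact appLit_litSub_other (by simpa [negLit_fst] using hm)
      by_cases hneg : negLit l ∈ D
      · have hmem : ({l} : Clause) ∈ Γ := by
          have := hunits (negLit l) hneg
          rwa [negLit_negLit] at this
        refine .empty ?_
        rw [mem_restrictCNF]
        refine ⟨{l}, hmem, ?_, ?_⟩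
        · rintro ⟨m, hm, hm'⟩
          simp only [Finset.mem_singleton] at hm
          subst hm; rw [happl] at hm'; simp at hm'
        · ext m'
          simp [restrictClause, happl]
      · have hvar : ∀ m ∈ D, m ≠ l → m.1 ≠ l.1 := by
          intro m hm hne he
          apply hneg
          have hml : m = l ∨ m = negLit l := by
            rcases m with ⟨v, p⟩; rcases l with ⟨w, q⟩
            simp only [Prod.mk.injEq] at he ⊢
            subst he
            cases p <;> cases q <;> simp_all [negLit]
          rcases hml with h | h
          · exact absurd h hne
          · rwa [← h]
        have hnt : ¬ clauseTrue (litSub (negLit l)) D := by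
          rintro ⟨m, hm, hm'⟩
          by_cases hml : m = l
          · subst hml; rw [happl] at hm'; simp at hm'
          · rw [hother m (hvar m hm hml)] at hm'; simp at hm'
        have hres : restrictClause (litSub (negLit l)) D = D.erase l := by
          ext m'
          simp only [restrictClause, Finset.mem_biUnion, Finset.mem_erase]
          constructor
          · rintro ⟨m, hm, hm'⟩
            by_cases hml : m = l
            · subst hml; rw [happl] at hm'; simp at hm'
            · rw [hother m (hvar m hm hml)] at hm'
              simp only [Finset.mem_singleton] at hm'
              subst hm'; exact ⟨hml, hm⟩
          · rintro ⟨hne, hm⟩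
            refine ⟨m', hm, ?_⟩
            rw [hother m' (hvar m' hm hne)]
            simp
        apply ih (D.erase l) (Finset.erase_ssubset hl)
        · rw [mem_restrictCNF]; exact ⟨D, hD, hnt, hres⟩
        · intro m hm
          have hmD := Finset.mem_of_mem_erase hm
          have hne := (Finset.mem_erase.mp hm).1
          have hap : appLit (litSub (negLit l)) (negLit m) = .inr (negLit m) :=
            hother _ (by simpa [negLit_fst] using hvar m hmD hne)
          rw [mem_restrictCNF]
          refine ⟨{negLit m}, hunits m hmD, ?_, ?_⟩
          · rintro ⟨x, hx, hx'⟩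
            simp only [Finset.mem_singleton] at hx
            subst hx; rw [hap] at hx'; simp at hx'
          · ext x; simp [restrictClause, hap]

lemma upimplies_self {Γ : CNF} {D : Clause} (h : D ∈ Γ) : UPimplies Γ D := by
  apply upfalse_self D
  · exact Multiset.mem_add.mpr (Or.inl h)
  · intro m hm
    refine Multiset.mem_add.mpr (Or.inr ?_)
    exact Multiset.mem_map_of_mem _ (Finset.mem_val.mpr hm)

lemma mem_varsClause {v : Var} {C : Clause} : v ∈ varsClause C ↔ ∃ p, (v, p) ∈ C := by
  simp only [varsClause, Finset.mem_image]
  constructor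
  · rintro ⟨⟨w, p⟩, hm, rfl⟩; exact ⟨p, hm⟩
  · rintro ⟨p, hp⟩; exact ⟨(v, p), hp, rfl⟩

lemma appLit_congr {σ σ' : Sub} {m : Lit} (h : σ m.1 = σ' m.1) :
    appLit σ m = appLit σ' m := by
  unfold appLit; rw [h]

lemma restrictClause_congr {σ σ' : Sub} {E : Clause}
    (h : ∀ m ∈ E, appLit σ m = appLit σ' m) :
    restrictClause σ E = restrictClause σ' E :=
  Finset.biUnion_congr rfl (fun m hm => by rw [h m hm])

lemma clauseTrue_congr {σ σ' : Sub} {E : Clause}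
    (h : ∀ m ∈ E, appLit σ m = appLit σ' m) :
    clauseTrue σ E ↔ clauseTrue σ' E := by
  unfold clauseTrue
  constructor
  · rintro ⟨m, hm, hm'⟩; exact ⟨m, hm, by rw [← h m hm]; exact hm'⟩
  · rintro ⟨m, hm, hm'⟩; exact ⟨m, hm, by rw [h m hm]; exact hm'⟩

end AuxLemmas


/-- extension-variable lemma: if `Γ` contains a clause `C ∨ b`
where `b` is a blocking variable whose unique occurrence in `Γ` is in this
clause, then there is a cost-LPR derivation from `Γ` containing all the
clauses `¬ℓ ∨ ¬b` for the literals `ℓ` of `C` (turning `b` into an extension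
variable with `b ↔ ¬C`). -/

theorem extension_variable_lemma (B : Finset Var) (Γ : CNF) (C : Clause)
    (b : Var) (hbB : b ∈ B) (hbC : b ∉ varsClause C)
    (hmem : insert ((b, true) : Lit) C ∈ Γ)
    (huniq : ∀ D ∈ Γ, b ∈ varsClause D → D = insert ((b, true) : Lit) C) :
    ∃ L : List Clause, IsDeriv CostLPR B Γ L ∧
      ∀ l ∈ C, ({negLit l, ((b, false) : Lit)} : Clause) ∈ L := by
  classical
  refine ⟨C.toList.map (fun l => ({negLit l, ((b, false) : Lit)} : Clause)), ?_, ?_⟩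
  swap
  · intro l hl
    exact List.mem_map.mpr ⟨l, Finset.mem_toList.mpr hl, rfl⟩
  intro i hi
  have hi' : i < C.toList.length := by simpa using hi
  simp only [List.getElem_map]
  set l : Lit := C.toList[i] with hldef
  have hl : l ∈ C := Finset.mem_toList.mp (List.getElem_mem hi')
  set D : Clause := {negLit l, ((b, false) : Lit)} with hD
  refine Or.inr (Or.inr (Or.inr ⟨?_, ?_⟩))
  swap
  · -- variables of D are in Γ
    intro v hv
    have hvD : v = l.1 ∨ v = b := by
      rcases mem_varsClause.mp hv with ⟨p, hp⟩
      rw [hD] at hp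
      simp only [Finset.mem_insert, Finset.mem_singleton] at hp
      rcases hp with hp | hp
      · left; exact congrArg Prod.fst hp
      · right; exact congrArg Prod.fst hp
    have hsub : varsClause (insert ((b, true) : Lit) C) ≤ varsCNF Γ :=
      Multiset.le_sup (Multiset.mem_map_of_mem _ hmem)
    apply hsub
    rcases hvD with rfl | rfl
    · exact mem_varsClause.mpr ⟨l.2, Finset.mem_insert_of_mem hl⟩
    · exact mem_varsClause.mpr ⟨true, Finset.mem_insert_self _ _⟩
  -- basic facts
  have hlb : l.1 ≠ b := by
    intro h
    exact hbC (mem_varsClause.mpr ⟨l.2, by rw [← h]; exact hl⟩)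
  have hbfD : ((b, false) : Lit) ∈ D := by simp [hD]
  have hnlD : negLit l ∈ D := by simp [hD]
  have hbtD : ((b, true) : Lit) ∉ D := by
    rw [hD]
    simp only [Finset.mem_insert, Finset.mem_singleton]
    rintro (h | h)
    · exact hlb (congrArg Prod.fst h).symm
    · simp at h
  have hnegb : negSub D b = .inl true := by
    unfold negSub
    rw [if_neg hbtD, if_pos hbfD]
  have hnegl : negSub D l.1 = .inl l.2 := by
    unfold negSub
    rcases hb2 : l.2 with _ | _
    · have h1 : ((l.1, true) : Lit) ∈ D := by
        have : negLit l = (l.1, true) := by simp [negLit, hb2]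
        rwa [this] at hnlD
      rw [if_pos h1]
    · have h1 : ((l.1, true) : Lit) ∉ D := by
        rw [hD]
        simp only [Finset.mem_insert, Finset.mem_singleton]
        rintro (h | h)
        · have := congrArg Prod.snd h
          simp [negLit, hb2] at this
        · exact hlb (congrArg Prod.fst h)
      have h2 : ((l.1, false) : Lit) ∈ D := by
        have : negLit l = (l.1, false) := by simp [negLit, hb2]
        rwa [this] at hnlD
      rw [if_neg h1, if_pos h2]
  have hnego : ∀ v, v ≠ l.1 → v ≠ b → negSub D v = .inr (v, true) := by
    intro v hv1 hv2
    unfold negSub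
    have h1 : ((v, true) : Lit) ∉ D := by
      rw [hD]
      simp only [Finset.mem_insert, Finset.mem_singleton]
      rintro (h | h)
      · exact hv1 (congrArg Prod.fst h)
      · exact hv2 (congrArg Prod.fst h)
    have h2 : ((v, false) : Lit) ∉ D := by
      rw [hD]
      simp only [Finset.mem_insert, Finset.mem_singleton]
      rintro (h | h)
      · exact hv1 (congrArg Prod.fst h)
      · exact hv2 (congrArg Prod.fst h)
    rw [if_neg h1, if_neg h2]
  set σ : Sub := fun v => if v = b then .inl false else negSub D v with hσ
  have hσb : σ b = .inl false := by simp [hσ]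
  have hσo : ∀ v, v ≠ b → σ v = negSub D v := by
    intro v hv; simp [hσ, hv]
  have hapbf : appLit σ (b, false) = .inl true := by
    simp [appLit, hσb, negSV]
  have hapl : appLit σ l = .inl true := by
    have h1 : σ l.1 = .inl l.2 := by rw [hσo l.1 hlb, hnegl]
    rcases m : l.2 with _ | _ <;>
      simp [appLit, h1, m, negSV]
  refine ⟨σ, ⟨?_, ?_⟩, ?_, ?_, ?_⟩
  · -- redundancy
    intro X hX
    rw [mem_restrictCNF] at hX
    obtain ⟨E, hE, hnt, rfl⟩ := hX
    rcases Multiset.mem_cons.mp hE with rfl | hE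
    · exact absurd ⟨(b, false), hbfD, hapbf⟩ hnt
    rcases Multiset.mem_add.mp hE with hEΓ | hEL
    · by_cases hbE : b ∈ varsClause E
      · exfalso
        apply hnt
        have := huniq E hEΓ hbE
        subst this
        exact ⟨l, Finset.mem_insert_of_mem hl, hapl⟩
      · have hagree : ∀ m ∈ E, appLit σ m = appLit (negSub D) m := by
          intro m hm
          apply appLit_congr
          apply hσo
          intro h
          exact hbE (mem_varsClause.mpr ⟨m.2, by rw [← h]; exact hm⟩)
        apply upimplies_self
        rw [mem_restrictCNF]
        refine ⟨E, Multiset.mem_add.mpr (Or.inl hEΓ), ?_, ?_⟩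
        · rw [← clauseTrue_congr hagree]; exact hnt
        · exact (restrictClause_congr hagree).symm
    · exfalso
      apply hnt
      have hEL' : E ∈ C.toList.map
          (fun l => ({negLit l, ((b, false) : Lit)} : Clause)) :=
        List.take_subset _ _ (by simpa using hEL)
      obtain ⟨l', _, rfl⟩ := List.mem_map.mp hEL'
      exact ⟨(b, false), by simp, hapbf⟩
  · -- cost
    intro τ hτ
    have hτb : τ b = true := by
      have := hτ (b, false) hbfD
      simpa using this
    have hτl : τ l.1 = l.2 := by
      have := hτ (negLit l) hnlD
      simpa [negLit] using this
    have hcomp : ∀ v, comp τ σ v = if v = b then false else τ v := by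
      intro v
      by_cases hv : v = b
      · subst hv; simp [comp, hσb]
      · rw [if_neg hv]
        by_cases hv1 : v = l.1
        · subst hv1
          rw [comp, hσo _ hv, hnegl]
          simp [hτl]
        · rw [comp, hσo _ hv, hnego v hv1 hv]; simp
    apply Finset.card_le_card
    intro v hv
    simp only [Finset.mem_filter] at hv ⊢
    rcases hv with ⟨hvB, hvt⟩
    rw [hcomp v] at hvt
    refine ⟨hvB, ?_⟩
    by_cases hvb : v = b
    · rw [if_pos hvb] at hvt; simp at hvt
    · rwa [if_neg hvb] at hvt
  · -- isAssign
    intro v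
    by_cases hv : v = b
    · subst hv; rw [hσb]; exact Or.inr (Or.inl rfl)
    · rw [hσo v hv]
      by_cases hv1 : v = l.1
      · subst hv1
        rw [hnegl]
        cases l.2
        · exact Or.inr (Or.inl rfl)
        · exact Or.inl rfl
      · rw [hnego v hv1 hv]
        exact Or.inr (Or.inr rfl)
  · -- domain
    intro v
    have hvD : v ∈ varsClause D ↔ (v = l.1 ∨ v = b) := by
      rw [mem_varsClause]
      constructor
      · rintro ⟨p, hp⟩
        rw [hD] at hp
        simp only [Finset.mem_insert, Finset.mem_singleton] at hp
        rcases hp with hp | hp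
        · left; exact congrArg Prod.fst hp
        · right; exact congrArg Prod.fst hp
      · rintro (rfl | rfl)
        · exact ⟨!l.2, by rw [show ((l.1, !l.2) : Lit) = negLit l from rfl]; exact hnlD⟩
        · exact ⟨false, hbfD⟩
    rw [hvD]
    constructor
    · rintro ⟨c, hc⟩
      by_cases hv : v = b
      · exact Or.inr hv
      · left
        by_contra hv1
        rw [hσo v hv, hnego v hv1 hv] at hc
        simp at hc
    · rintro (rfl | rfl)
      · exact ⟨l.2, by rw [hσo _ hlb, hnegl]⟩
      · exact ⟨false, hσb⟩
  · -- card of difference = 1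
    have : (varsClause D).filter (fun v => σ v ≠ negSub D v) = {b} := by
      ext v
      simp only [Finset.mem_filter, Finset.mem_singleton]
      constructor
      · rintro ⟨_, hne⟩
        by_contra hv
        exact hne (hσo v hv)
      · rintro rfl
        refine ⟨mem_varsClause.mpr ⟨false, hbfD⟩, ?_⟩
        rw [hσb, hnegb]
        simp
    rw [this, Finset.card_singleton]

end PaperMaxSAT
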